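/- Let (J_n, X_n) be a Markov renewal process on finite X, and let 0 ≠ k ∈ X with p_{kk} < 1. Then the reduced semi-Markov kernel _kQ_{ij}(t) = Q_{ij}(t) + Σ_{n=0}^∞ (Q_{ik} * Q_{kk}^{*n} * Q_{kj})(t) defines, for each i, a probability distribution concentrated on (X \ {k}) × [0,∞): Σ_{j ≠ k} _kQ_{ij}(∞) = 1. -/

import Mathlib

open MeasureTheory ENNReal

/-- Convolution of two (possibly improper) distributions on `ℝ`, i.e. the image of the
product measure under addition. -/
noncomputable def mconv (ν₁ ν₂ : Measure ℝ) : Measure ℝ :=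
  Measure.map (fun p : ℝ × ℝ => p.1 + p.2) (ν₁.prod ν₂)

/-- `n`-fold convolution power `ν^{*n}` (with `ν^{*0} = δ₀`). -/
noncomputable def mconvIter (ν : Measure ℝ) : ℕ → Measure ℝ
  | 0 => Measure.dirac 0
  | n + 1 => mconv (mconvIter ν n) ν

lemma mconv_univ (ν₁ ν₂ : Measure ℝ) [SFinite ν₁] [SFinite ν₂] :
    mconv ν₁ ν₂ Set.univ = ν₁ Set.univ * ν₂ Set.univ := by
  rw [mconv, Measure.map_apply (by fun_prop) MeasurableSet.univ, Set.preimage_univ,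
    ← Set.univ_prod_univ, Measure.prod_prod]

lemma mconv_finite (ν₁ ν₂ : Measure ℝ) [IsFiniteMeasure ν₁] [IsFiniteMeasure ν₂] :
    IsFiniteMeasure (mconv ν₁ ν₂) := by
  constructor
  rw [mconv_univ]
  exact ENNReal.mul_lt_top (measure_lt_top _ _) (measure_lt_top _ _)

lemma mconvIter_spec (ν : Measure ℝ) [IsFiniteMeasure ν] (n : ℕ) :
    IsFiniteMeasure (mconvIter ν n) ∧ mconvIter ν n Set.univ = (ν Set.univ) ^ n := by
  induction n with
  | zero =>
    refine ⟨?_, by simp [mconvIter]⟩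
    rw [show mconvIter ν 0 = Measure.dirac 0 from rfl]; infer_instance
  | succ n ih =>
    haveI := ih.1
    refine ⟨?_, ?_⟩
    · rw [show mconvIter ν (n+1) = mconv (mconvIter ν n) ν from rfl]
      exact mconv_finite _ _
    · rw [mconvIter, mconv_univ, ih.2, pow_succ]

lemma triple_univ (ν₁ ν₂ ν₃ : Measure ℝ) [IsFiniteMeasure ν₁] [IsFiniteMeasure ν₂]
    [IsFiniteMeasure ν₃] :
    mconv (mconv ν₁ ν₂) ν₃ Set.univ = ν₁ Set.univ * ν₂ Set.univ * ν₃ Set.univ := by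
  haveI := mconv_finite ν₁ ν₂
  rw [mconv_univ, mconv_univ]

/-- For a Markov renewal process with semi-Markov kernel `Q_{ij}` (here
`Q i j` is the measure with distribution function `Q_{ij}(t)`), a state `k ≠ 0` with
`p_{kk} = Q_{kk}(∞) < 1`, the reduced kernel
`ₖQ_{ij} = Q_{ij} + ∑_{n≥0} Q_{ik} * Q_{kk}^{*n} * Q_{kj}` defines, for each `i`, a
probability distribution concentrated on `(X \ {k}) × [0,∞)`:
`∑_{j ≠ k} ₖQ_{ij}(∞) = 1`. -/
theorem reduced_kernel_total_mass_one {m : ℕ}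
    (Q : Fin (m + 1) → Fin (m + 1) → Measure ℝ)
    (hQsupp : ∀ i j, Q i j {t | t < 0} = 0)
    (hrow : ∀ i, ∑ j, Q i j Set.univ = 1)
    (k : Fin (m + 1)) (hk : k ≠ 0)
    (hpkk : Q k k Set.univ < 1) :
    ∀ i, ∑ j ∈ Finset.univ.erase k,
      (Q i j + Measure.sum (fun n : ℕ =>
        mconv (mconv (Q i k) (mconvIter (Q k k) n)) (Q k j))) Set.univ = 1 := by
  intro i
  have hfin : ∀ a b, IsFiniteMeasure (Q a b) := by
    intro a b
    constructor
    calc Q a b Set.univ ≤ ∑ j, Q a j Set.univ :=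
          Finset.single_le_sum (f := fun j => Q a j Set.univ) (fun _ _ => zero_le) (Finset.mem_univ b)
      _ = 1 := hrow a
      _ < ⊤ := one_lt_top
  haveI := hfin i k
  haveI := hfin k k
  set p := Q k k Set.univ with hp
  have hp1 : p ≤ 1 := hpkk.le
  have hsub_ne_zero : 1 - p ≠ 0 := by
    simp [tsub_eq_zero_iff_le, not_le, hpkk]
  have hsub_ne_top : (1 : ℝ≥0∞) - p ≠ ⊤ := by
    exact ne_top_of_le_ne_top one_ne_top tsub_le_self
  -- rewrite each summand
  have key : ∀ j, (Q i j + Measure.sum (fun n : ℕ =>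
      mconv (mconv (Q i k) (mconvIter (Q k k) n)) (Q k j))) Set.univ
      = Q i j Set.univ + Q i k Set.univ * (1 - p)⁻¹ * Q k j Set.univ := by
    intro j
    haveI := hfin k j
    rw [Measure.add_apply, Measure.sum_apply _ MeasurableSet.univ]
    congr 1
    have : ∀ n : ℕ, mconv (mconv (Q i k) (mconvIter (Q k k) n)) (Q k j) Set.univ
        = Q i k Set.univ * Q k j Set.univ * p ^ n := by
      intro n
      haveI := (mconvIter_spec (Q k k) n).1
      rw [triple_univ, (mconvIter_spec (Q k k) n).2]
      ring
    simp only [this]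
    rw [ENNReal.tsum_mul_left, ENNReal.tsum_geometric]
    ring
  simp only [key]
  rw [Finset.sum_add_distrib, ← Finset.mul_sum]
  have hbk : ∑ j ∈ Finset.univ.erase k, Q k j Set.univ = 1 - p := by
    have h := hrow k
    rw [← Finset.add_sum_erase _ _ (Finset.mem_univ k)] at h
    rw [← h, ENNReal.add_sub_cancel_left (by simp [hp, measure_ne_top])]
  rw [hbk, mul_assoc, ENNReal.inv_mul_cancel hsub_ne_zero hsub_ne_top, mul_one,
    Finset.sum_erase_add _ _ (Finset.mem_univ k), hrow i]
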